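/- For real numbers y ≥ 3 and θ ≥ 1, the sum of reciprocals of primes q in the interval (y^θ/log y, y^θ] satisfies: ∑ 1/q ≤ log(θ log y / (θ log y − log log y)) + 1/(2(θ log y)^2) + 1/(2(log(y^θ/log y))^2), using the Rosser–Schoenfeld bounds |∑_{q ≤ x} 1/q − log log x − M| ≤ 1/(2(log x)^2) for x ≥ 286. -/

import Mathlib

theorem stmt_15 (y θ M : ℝ) (hy : 3 ≤ y) (hθ : 1 ≤ θ)
    (h286 : 286 ≤ y ^ θ / Real.log y)
    (hRS : ∀ x : ℝ, 286 ≤ x →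
      |(∑ q ∈ (Finset.range (⌊x⌋₊ + 1)).filter Nat.Prime, (1 : ℝ) / q)
          - Real.log (Real.log x) - M| ≤ 1 / (2 * (Real.log x) ^ 2)) :
    (∑ q ∈ (Finset.range (⌊y ^ θ⌋₊ + 1)).filter
        (fun q => Nat.Prime q ∧ y ^ θ / Real.log y < (q : ℝ)), (1 : ℝ) / q) ≤
      Real.log (θ * Real.log y / (θ * Real.log y - Real.log (Real.log y)))
        + 1 / (2 * (θ * Real.log y) ^ 2)
        + 1 / (2 * (Real.log (y ^ θ / Real.log y)) ^ 2) := by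
  have hy0 : (0:ℝ) < y := by linarith
  have hL : (1:ℝ) ≤ Real.log y := by
    have he : Real.exp 1 ≤ y := le_trans (le_trans Real.exp_one_lt_d9.le (by norm_num)) hy
    calc (1:ℝ) = Real.log (Real.exp 1) := (Real.log_exp 1).symm
      _ ≤ Real.log y := Real.log_le_log (Real.exp_pos 1) he
  have hL0 : (0:ℝ) < Real.log y := by linarith
  have hyt0 : (0:ℝ) < y ^ θ := Real.rpow_pos_of_pos hy0 θ
  set z := y ^ θ / Real.log y with hzdef
  have hz0 : (0:ℝ) < z := by linarith
  have hzle : z ≤ y ^ θ := by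
    rw [hzdef, div_le_iff₀ hL0]
    nlinarith
  have h286' : (286:ℝ) ≤ y ^ θ := le_trans h286 hzle
  have hlogyθ : Real.log (y ^ θ) = θ * Real.log y := Real.log_rpow hy0 θ
  have hlogz : Real.log z = θ * Real.log y - Real.log (Real.log y) := by
    rw [hzdef, Real.log_div (ne_of_gt hyt0) (ne_of_gt hL0), hlogyθ]
  have hT0 : (0:ℝ) < θ * Real.log y := by nlinarith
  have hlogz0 : (0:ℝ) < Real.log z := by
    calc (0:ℝ) < Real.log 286 := Real.log_pos (by norm_num)
      _ ≤ Real.log z := Real.log_le_log (by norm_num) h286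
  have hlogdiff : Real.log (θ * Real.log y / (θ * Real.log y - Real.log (Real.log y)))
      = Real.log (θ * Real.log y) - Real.log (θ * Real.log y - Real.log (Real.log y)) := by
    rw [Real.log_div (ne_of_gt hT0)]
    rw [← hlogz]; exact ne_of_gt hlogz0
  set n := ⌊y ^ θ⌋₊ with hn
  set m := ⌊z⌋₊ with hm
  have hsub : Finset.filter Nat.Prime (Finset.range (m+1)) ⊆
      Finset.filter Nat.Prime (Finset.range (n+1)) :=
    Finset.filter_subset_filter _ (Finset.range_subset_range.2
      (Nat.succ_le_succ (Nat.floor_le_floor hzle)))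
  have hset : Finset.filter (fun q => Nat.Prime q ∧ z < (q:ℝ)) (Finset.range (n+1))
      = Finset.filter Nat.Prime (Finset.range (n+1)) \
        Finset.filter Nat.Prime (Finset.range (m+1)) := by
    ext q
    simp only [Finset.mem_sdiff, Finset.mem_filter, Finset.mem_range]
    have hiff : (q:ℝ) ≤ z ↔ q < m + 1 := by
      rw [Nat.lt_succ_iff, hm, Nat.le_floor_iff hz0.le]
    constructor
    · rintro ⟨hq, hp, hzq⟩
      exact ⟨⟨hq, hp⟩, fun ⟨hq', _⟩ => absurd (hiff.2 hq') (not_le.2 hzq)⟩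
    · rintro ⟨⟨hq, hp⟩, hnot⟩
      refine ⟨hq, hp, ?_⟩
      by_contra hle
      exact hnot ⟨hiff.1 (not_lt.1 hle), hp⟩
  rw [hset, Finset.sum_sdiff_eq_sub hsub]
  have h1 := hRS (y ^ θ) h286'
  have h2 := hRS z h286
  rw [abs_le] at h1 h2
  rw [hlogyθ] at h1
  rw [hlogz] at h2
  have e1 := h1.2
  have e2 := h2.1
  rw [hlogdiff, hlogz]
  linarith
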